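/- Variable elimination (projection) for generated polyhedra: let V be a finite type, E = V → ℝ, v : V, and P, R ⊆ E. Writing e_v = Pi.single v (1 : ℝ) and L for the underlying set of the ℝ-linear span of {e_v}, one has (convexHull ℝ P + cone R) + L = convexHull ℝ P + cone (R ∪ {e_v, -e_v}); that is, existentially quantifying the coordinate v of a polyhedron generated by points P and rays R yields the polyhedron generated by the same points P and rays R together with the unit rays in the direction of v. -/

import Mathlib

open scoped NNReal Pointwise

/-- The convex cone generated by `R`: the underlying set of the `ℝ≥0`-submodule
span of `R`. -/
def cone {E : Type*} [AddCommGroup E] [Module ℝ E] (R : Set E) : Set E :=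
  (Submodule.span ℝ≥0 R : Submodule ℝ≥0 E)

lemma cone_union {E : Type*} [AddCommGroup E] [Module ℝ E] (A B : Set E) :
    cone (A ∪ B) = cone A + cone B := by
  simp [cone, Submodule.span_union, Submodule.coe_sup]

lemma cone_pm {E : Type*} [AddCommGroup E] [Module ℝ E] (e : E) :
    cone {e, -e} = ((Submodule.span ℝ ({e} : Set E) : Submodule ℝ E) : Set E) := by
  ext x
  simp only [cone, SetLike.mem_coe, Submodule.mem_span_pair, Submodule.mem_span_singleton]
  constructor
  · rintro ⟨a, b, rfl⟩
    refine ⟨(a : ℝ) - (b : ℝ), ?_⟩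
    simp [NNReal.smul_def, sub_smul, smul_neg]; module
  · rintro ⟨c, rfl⟩
    rcases le_or_gt 0 c with h | h
    · exact ⟨⟨c, h⟩, 0, by simp [NNReal.smul_def]; rfl⟩
    · refine ⟨0, ⟨-c, by linarith⟩, ?_⟩
      change (0 : ℝ≥0) • e + (-c) • -e = c • e
      simp [NNReal.smul_def, smul_neg]

/-- Variable elimination (projection) for generated polyhedra: existentially
quantifying the coordinate `v` of a polyhedron generated by points `P` and rays `R`
yields the polyhedron generated by the same points `P` and rays `R` together with
the unit rays in the direction of `v`. -/
theorem project_generators {V : Type*} [Fintype V] [DecidableEq V] (v : V)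
    (P R : Set (V → ℝ)) :
    (convexHull ℝ P + cone R) + ((Submodule.span ℝ ({Pi.single v (1 : ℝ)} : Set (V → ℝ)) : Submodule ℝ (V → ℝ)) : Set (V → ℝ)) =
      convexHull ℝ P + cone (R ∪ {Pi.single v (1 : ℝ), -Pi.single v (1 : ℝ)}) := by
  rw [cone_union, cone_pm, add_assoc]
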